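/- Let L be a Lie superalgebra over R, let P : L → L be an R-linear map with P∘P = P whose image V = P(L) is an abelian subalgebra ([Pa,Pb] = 0 for all a,b ∈ L), and let Δ ∈ L be homogeneous. Then the higher derived brackets of Δ are symmetric in the ℤ₂-graded sense: for all homogeneous a₁,…,aₙ ∈ V and every 1 ≤ i < n, {a₁,…,aᵢ,a_{i+1},…,aₙ}_Δ = (−1)^{ãᵢ·ã_{i+1}} {a₁,…,a_{i+1},aᵢ,…,aₙ}_Δ. -/

import Mathlib

/-- The sign `(-1)^e` for a parity `e : ZMod 2`, as an element of `R`. -/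
def sgn (R : Type*) [CommRing R] (e : ZMod 2) : R := if e = 0 then 1 else -1

variable {R : Type*} [CommRing R] {L : Type*} [AddCommGroup L] [Module R L]

/-- Iterated bracket `[...[[z,a₁],a₂],...,aₙ]`. -/
def iterBr (br : L →ₗ[R] L →ₗ[R] L) : L → List L → L
  | z, [] => z
  | z, a :: rest => iterBr br (br z a) rest

/-- The `n`-th higher derived bracket `{a₁,...,aₙ}_Δ := P [...[[Δ,a₁],a₂],...,aₙ]`. -/
def dbr (br : L →ₗ[R] L →ₗ[R] L) (P : L →ₗ[R] L) (Δ : L) (n : ℕ) (a : Fin n → L) : L :=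
  P (iterBr br Δ (List.ofFn a))

lemma sgn_add' (e f : ZMod 2) : sgn R (e + f) = sgn R e * sgn R f := by
  have he : e = 0 ∨ e = 1 := by revert e; decide
  have hf : f = 0 ∨ f = 1 := by revert f; decide
  rcases he with h | h <;> rcases hf with h' | h' <;> subst h <;> subst h' <;>
    simp [sgn, show (1 + 1 : ZMod 2) = 0 from by decide]

lemma iterBr_smul (br : L →ₗ[R] L →ₗ[R] L) (c : R) (z : L) (l : List L) :
    iterBr br (c • z) l = c • iterBr br z l := by
  induction l generalizing z with
  | nil => rfl
  | cons x xs ih => simp [iterBr, map_smul, LinearMap.smul_apply, ih]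

lemma iterBr_append (br : L →ₗ[R] L →ₗ[R] L) (z : L) (l1 l2 : List L) :
    iterBr br z (l1 ++ l2) = iterBr br (iterBr br z l1) l2 := by
  induction l1 generalizing z with
  | nil => rfl
  | cons x xs ih => simp [iterBr, ih]

lemma iterBr_hom (grading : ZMod 2 → Submodule R L) (br : L →ₗ[R] L →ₗ[R] L)
    (hgrade : ∀ (i j : ZMod 2) (a b : L), a ∈ grading i → b ∈ grading j →
      br a b ∈ grading (i + j))
    (z : L) (dz : ZMod 2) (hz : z ∈ grading dz) (l : List L)
    (hl : ∀ x ∈ l, ∃ d, x ∈ grading d) :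
    ∃ d, iterBr br z l ∈ grading d := by
  induction l generalizing z dz with
  | nil => exact ⟨dz, hz⟩
  | cons x xs ih =>
    obtain ⟨d, hd⟩ := hl x (List.mem_cons_self ..)
    exact ih (br z x) (dz + d) (hgrade _ _ _ _ hz hd)
      (fun y hy => hl y (List.mem_cons_of_mem _ hy))

/-- Let `L` be a Lie superalgebra over `R`, `P : L → L` an `R`-linear
projector whose image `V = P(L)` is an abelian subalgebra, and `Δ ∈ L` homogeneous.
Then the higher derived brackets of `Δ` are symmetric in the `ℤ₂`-graded sense:
exchanging two adjacent homogeneous arguments of `V` produces the Koszul sign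
`(−1)^{ãᵢ·ã_{i+1}}`. -/
theorem higher_derived_brackets_symmetric
    (R : Type*) [CommRing R]
    (L : Type*) [AddCommGroup L] [Module R L]
    (grading : ZMod 2 → Submodule R L)
    (hdirect : DirectSum.IsInternal grading)
    (br : L →ₗ[R] L →ₗ[R] L)
    (hgrade : ∀ (i j : ZMod 2) (a b : L), a ∈ grading i → b ∈ grading j →
      br a b ∈ grading (i + j))
    (hskew : ∀ (i j : ZMod 2) (a b : L), a ∈ grading i → b ∈ grading j →
      br a b = (-(sgn R (i * j))) • br b a)
    (hjacobi : ∀ (i j : ZMod 2) (a b c : L), a ∈ grading i → b ∈ grading j →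
      br a (br b c) = br (br a b) c + (sgn R (i * j)) • br b (br a c))
    (P : L →ₗ[R] L) (hproj : ∀ x, P (P x) = P x)
    (habelian : ∀ x y : L, br (P x) (P y) = 0)
    (Δ : L) (dΔ : ZMod 2) (hΔ : Δ ∈ grading dΔ)
    (n : ℕ) (p : Fin n → ZMod 2) (a : Fin n → L)
    (haV : ∀ i, a i ∈ LinearMap.range P)
    (hahom : ∀ i, a i ∈ grading (p i))
    (i j : Fin n) (hij : (i : ℕ) + 1 = (j : ℕ)) :
    dbr br P Δ n a = sgn R (p i * p j) • dbr br P Δ n (a ∘ Equiv.swap i j) := by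
  classical
  -- key pointwise lemma
  have key : ∀ (z : L) (dz : ZMod 2), z ∈ grading dz →
      ∀ (x y : L) (px py : ZMod 2), x ∈ LinearMap.range P → y ∈ LinearMap.range P →
      x ∈ grading px → y ∈ grading py →
      br (br z x) y = sgn R (px * py) • br (br z y) x := by
    intro z dz hz x y px py hxP hyP hx hy
    obtain ⟨x', rfl⟩ := hxP
    obtain ⟨y', rfl⟩ := hyP
    have hj := hjacobi dz px z (P x') (P y') hz hx
    rw [habelian x' y', map_zero] at hj
    have h1 : br (br z (P x')) (P y')
        = (-(sgn R (dz * px))) • br (P x') (br z (P y')) := by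
      rw [neg_smul]
      exact eq_neg_of_add_eq_zero_left hj.symm
    have h2 : br (P x') (br z (P y'))
        = (-(sgn R (px * (dz + py)))) • br (br z (P y')) (P x') :=
      hskew px (dz + py) _ _ hx (hgrade _ _ _ _ hz hy)
    rw [h1, h2, smul_smul, neg_mul_neg, ← sgn_add']
    congr 2
    have : ∀ dz px py : ZMod 2, dz * px + px * (dz + py) = px * py := by decide
    exact this dz px py
  -- general adjacent-swap lemma for lists
  have swap_mid : ∀ (l1 : List L), (∀ x ∈ l1, ∃ d, x ∈ grading d) →
      ∀ (x y : L) (px py : ZMod 2), x ∈ LinearMap.range P → y ∈ LinearMap.range P →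
      x ∈ grading px → y ∈ grading py → ∀ (l2 : List L),
      iterBr br Δ (l1 ++ x :: y :: l2)
        = sgn R (px * py) • iterBr br Δ (l1 ++ y :: x :: l2) := by
    intro l1 hl1 x y px py hxP hyP hx hy l2
    obtain ⟨d1, hd1⟩ := iterBr_hom grading br hgrade Δ dΔ hΔ l1 hl1
    rw [iterBr_append, iterBr_append]
    show iterBr br (br (br (iterBr br Δ l1) x) y) l2
      = sgn R (px * py) • iterBr br (br (br (iterBr br Δ l1) y) x) l2
    rw [key _ d1 hd1 x y px py hxP hyP hx hy, iterBr_smul]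
  -- list decompositions
  have hi2 : (i : ℕ) + 2 ≤ n := by omega
  have decomp : ∀ (b : Fin n → L),
      List.ofFn b = (List.ofFn b).take i ++ b i :: b j :: (List.ofFn b).drop (i + 2) := by
    intro b
    have h1 : (List.ofFn b).drop i = b i :: (List.ofFn b).drop (i + 1) := by
      rw [List.drop_eq_getElem_cons (by simp [i.isLt])]
      simp
    have h2 : (List.ofFn b).drop (i + 1) = b j :: (List.ofFn b).drop (i + 2) := by
      rw [List.drop_eq_getElem_cons (by simp; omega)]
      congr 1
      · simp only [List.getElem_ofFn]
        congr 1
        exact Fin.ext hij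
    conv_lhs => rw [← List.take_append_drop i (List.ofFn b), h1, h2]
  have hswap_i : Equiv.swap i j i = j := Equiv.swap_apply_left i j
  have hswap_j : Equiv.swap i j j = i := Equiv.swap_apply_right i j
  have take_eq : (List.ofFn (a ∘ Equiv.swap i j)).take i = (List.ofFn a).take i := by
    apply List.ext_getElem
    · simp
    · intro k h1 h2
      have hk : k < (i : ℕ) := by simp [List.length_take] at h1; omega
      simp only [List.getElem_take, List.getElem_ofFn, Function.comp_apply]
      rw [Equiv.swap_apply_of_ne_of_ne
        (Fin.ne_of_val_ne (by simpa using by omega))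
        (Fin.ne_of_val_ne (by simpa using by omega))]
  have drop_eq : (List.ofFn (a ∘ Equiv.swap i j)).drop (i + 2)
      = (List.ofFn a).drop (i + 2) := by
    apply List.ext_getElem
    · simp
    · intro k h1 h2
      simp only [List.getElem_drop, List.getElem_ofFn, Function.comp_apply]
      rw [Equiv.swap_apply_of_ne_of_ne
        (Fin.ne_of_val_ne (by simpa using by omega))
        (Fin.ne_of_val_ne (by simpa using by omega))]
  have decomp1 : List.ofFn a
      = (List.ofFn a).take i ++ a i :: a j :: (List.ofFn a).drop (i + 2) := decomp a
  have decomp2 : List.ofFn (a ∘ Equiv.swap i j)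
      = (List.ofFn a).take i ++ a j :: a i :: (List.ofFn a).drop (i + 2) := by
    rw [decomp (a ∘ Equiv.swap i j), take_eq, drop_eq]
    simp [hswap_i, hswap_j]
  have htake_hom : ∀ x ∈ (List.ofFn a).take i, ∃ d, x ∈ grading d := by
    intro x hx
    have := List.mem_ofFn.mp (List.mem_of_mem_take hx)
    obtain ⟨k, rfl⟩ := this
    exact ⟨p k, hahom k⟩
  unfold dbr
  rw [decomp1, decomp2,
    swap_mid _ htake_hom (a i) (a j) (p i) (p j) (haV i) (haV j) (hahom i) (hahom j),
    map_smul]
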